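/- Let α ∈ ℝ be irrational and positive, let β = α/(1+α), and let θ : ℝ/ℤ → ℝ/ℤ be the rotation x ↦ x + β. If f : ℝ/ℤ → ℤ is a function of the form f = Σ_n n·χ_{I_n} with each I_n a finite disjoint union of half-open arcs [lβ, mβ) mod 1 (l, m ∈ ℤ), and f is invariant under θ (f ∘ θ = f), then f is constant. -/

import Mathlib

/-- Let `α ∈ ℝ` be irrational and positive, `β = α/(1+α)`, and let `θ : ℝ/ℤ → ℝ/ℤ` be the
rotation `x ↦ x + β`.  If `f : ℝ/ℤ → ℤ` takes finitely many values, each level set of `f`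
is a finite union of half-open arcs `[lβ, mβ) mod 1` (`l, m ∈ ℤ`), and `f` is invariant
under `θ`, then `f` is constant. -/
theorem invariant_step_function_constant
    (α : ℝ) (hα : Irrational α) (hpos : 0 < α) (β : ℝ) (hβ : β = α / (1 + α))
    (f : AddCircle (1 : ℝ) → ℤ)
    (hfin : (Set.range f).Finite)
    (hlevel : ∀ n : ℤ, ∃ S : Finset (ℤ × ℤ),
      f ⁻¹' {n} = ⋃ p ∈ S,
        (fun t : ℝ => (t : AddCircle (1 : ℝ))) '' Set.Ico ((p.1 : ℝ) * β) ((p.2 : ℝ) * β))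
    (hinv : ∀ x, f (x + (β : AddCircle (1 : ℝ))) = f x) :
    ∃ c : ℤ, ∀ x, f x = c := by
  -- Every point of the orbit of 0 has value f 0.
  have horb : ∀ k : ℤ, f (((k : ℝ) * β : ℝ) : AddCircle (1 : ℝ)) = f 0 := by
    intro k
    induction k using Int.induction_on with
    | zero => norm_num
    | succ k ih =>
        have h1 : ((((k : ℤ) + 1 : ℤ) : ℝ) * β : ℝ) = ((k : ℤ) : ℝ) * β + β := by
          push_cast; ring
        rw [h1, QuotientAddGroup.mk_add, hinv, ih]
    | pred k ih =>
        have h1 : (((-(k : ℤ) - 1 : ℤ) : ℝ) * β : ℝ) + β = ((-(k : ℤ) : ℤ) : ℝ) * β := by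
          push_cast; ring
        have h2 := hinv ((((-(k : ℤ) - 1 : ℤ) : ℝ) * β : ℝ) : AddCircle (1 : ℝ))
        rw [← QuotientAddGroup.mk_add, h1, ih] at h2
        exact h2.symm
  refine ⟨f 0, fun x => ?_⟩
  set n := f x with hn
  obtain ⟨S, hS⟩ := hlevel n
  have hx : x ∈ f ⁻¹' {n} := by simp [hn]
  rw [hS] at hx
  simp only [Set.mem_iUnion, Set.mem_image] at hx
  obtain ⟨p, hpS, t, ht, hxt⟩ := hx
  -- The left endpoint of the arc lies in the same level set.
  have hleft : ((p.1 : ℝ) * β : ℝ) ∈ Set.Ico ((p.1 : ℝ) * β) ((p.2 : ℝ) * β) :=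
    ⟨le_refl _, lt_of_le_of_lt ht.1 ht.2⟩
  have hmem : (((p.1 : ℝ) * β : ℝ) : AddCircle (1 : ℝ)) ∈ f ⁻¹' {n} := by
    rw [hS]
    simp only [Set.mem_iUnion, Set.mem_image]
    exact ⟨p, hpS, _, hleft, rfl⟩
  have : f (((p.1 : ℝ) * β : ℝ) : AddCircle (1 : ℝ)) = n := hmem
  rw [horb p.1] at this
  exact this.symm
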